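/- Let M ∈ ℝ^{n×n} be a matrix all of whose complex eigenvalues have strictly negative real part (a Hurwitz matrix), and let x : ℝ → ℝⁿ be a differentiable function satisfying x'(t) = M x(t) for all t ≥ 0. Then x(t) → 0 as t → ∞. -/

import Mathlib

open Matrix Filter

namespace HurwitzODEAux

open NormedSpace Polynomial

attribute [local instance] Matrix.linftyOpNormedRing Matrix.linftyOpNormedAlgebra

noncomputable section
variable {n : ℕ}

lemma real_decay {c : ℝ} (hc : c < 0) (k : ℕ) :
    Tendsto (fun t : ℝ => t ^ k * Real.exp (c * t)) atTop (nhds 0) := by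
  have hpos : (0:ℝ) < -c := neg_pos.mpr hc
  have h := (Real.tendsto_pow_mul_exp_neg_atTop_nhds_zero k).comp
    (tendsto_id.const_mul_atTop hpos)
  have h2 := h.const_mul (((-c) ^ k)⁻¹)
  rw [mul_zero] at h2
  refine h2.congr fun t => ?_
  have hck : ((-c) ^ k) ≠ 0 := pow_ne_zero _ (ne_of_gt hpos)
  field_simp [Function.comp, mul_pow]
  simp only [Function.comp, id, neg_mul, neg_neg, mul_pow]
  field_simp
  rw [← mul_pow, neg_mul]

lemma cexp_decay {μ : ℂ} (hμ : μ.re < 0) (c : ℂ) (k : ℕ) :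
    Tendsto (fun t : ℝ => Complex.exp ((t : ℂ) * μ) * (c * (t : ℂ) ^ k)) atTop (nhds 0) := by
  have key := (real_decay hμ k).const_mul ‖c‖
  rw [mul_zero] at key
  refine squeeze_zero_norm' ?_ key
  filter_upwards [eventually_ge_atTop (0:ℝ)] with t ht
  have : ‖Complex.exp ((t : ℂ) * μ) * (c * (t : ℂ) ^ k)‖
      = Real.exp (μ.re * t) * (‖c‖ * t ^ k) := by
    rw [norm_mul, norm_mul, Complex.norm_exp]
    norm_num
    rw [abs_of_nonneg ht, mul_comm t μ.re]
  rw [this]; exact le_of_eq (by ring)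

lemma exp_trunc (N : Matrix (Fin n) (Fin n) ℂ) (μ : ℂ) (w : Fin n → ℂ)
    (K : ℕ) (hSw : ((N - μ • 1) ^ K).mulVec w = 0) (t : ℝ) :
    (exp (t • N)).mulVec w
      = ∑ k ∈ Finset.range K,
          (Complex.exp ((t : ℂ) * μ) * ((k.factorial : ℂ)⁻¹ * (t : ℂ) ^ k)) •
            ((N - μ • 1) ^ k).mulVec w := by
  set S : Matrix (Fin n) (Fin n) ℂ := N - μ • 1 with hS
  have h1 : (t • N : Matrix (Fin n) (Fin n) ℂ)
      = ((t : ℂ) * μ) • (1 : Matrix (Fin n) (Fin n) ℂ) + (t : ℂ) • S := by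
    have : (t • N : Matrix (Fin n) (Fin n) ℂ) = (t : ℂ) • N := by
      rw [← algebraMap_smul ℂ t N, Complex.coe_algebraMap]
    rw [this, hS, smul_sub, smul_smul]
    abel_nf
  rw [h1,
    Matrix.exp_add_of_commute _ _ (((Commute.one_left S).smul_left _).smul_right _)]
  have h2 : exp (((t : ℂ) * μ) • (1 : Matrix (Fin n) (Fin n) ℂ))
      = Complex.exp ((t : ℂ) * μ) • (1 : Matrix (Fin n) (Fin n) ℂ) := by
    rw [← Algebra.algebraMap_eq_smul_one, ← Algebra.algebraMap_eq_smul_one, Complex.exp_eq_exp_ℂ]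
    exact (algebraMap_exp_comm (𝕂 := ℂ) (𝔸 := Matrix (Fin n) (Fin n) ℂ) _).symm
  rw [h2, smul_mul_assoc, one_mul, Matrix.smul_mulVec]
  have hsum0 := expSeries_hasSum_exp (𝕂 := ℂ) ((t : ℂ) • S)
  rw [expSeries_apply_eq'] at hsum0
  let L : Matrix (Fin n) (Fin n) ℂ →ₗ[ℂ] (Fin n → ℂ) :=
    { toFun := fun A => A.mulVec w
      map_add' := fun A B => Matrix.add_mulVec A B w
      map_smul' := fun c A => Matrix.smul_mulVec c A w }
  have hsum := hsum0.mapL L.toContinuousLinearMap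
  have heq : ∀ k : ℕ, L.toContinuousLinearMap ((k.factorial : ℂ)⁻¹ • ((t : ℂ) • S) ^ k)
      = ((k.factorial : ℂ)⁻¹ * (t : ℂ) ^ k) • (S ^ k).mulVec w := by
    intro k
    simp only [LinearMap.coe_toContinuousLinearMap', LinearMap.coe_mk, AddHom.coe_mk, L]
    rw [_root_.smul_pow, smul_smul, Matrix.smul_mulVec]
  rw [funext heq] at hsum
  have hzero : ∀ k ∉ Finset.range K,
      ((k.factorial : ℂ)⁻¹ * (t : ℂ) ^ k) • (S ^ k).mulVec w = 0 := by
    intro k hk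
    rw [Finset.mem_range, not_lt] at hk
    have h3 : (S ^ k).mulVec w = 0 := by
      have : S ^ k = S ^ (k - K) * S ^ K := by rw [← pow_add]; congr 1; omega
      rw [this, ← Matrix.mulVec_mulVec, hSw, Matrix.mulVec_zero]
    rw [h3, smul_zero]
  have hfin := hasSum_sum_of_ne_finset_zero (L := SummationFilter.unconditional ℕ) hzero
  have huniq := hsum.unique hfin
  have hL : L.toContinuousLinearMap (exp ((t : ℂ) • S)) = (exp ((t : ℂ) • S)).mulVec w := rfl
  replace huniq : (exp ((t : ℂ) • S)).mulVec w = _ := huniq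
  rw [huniq, Finset.smul_sum]
  refine Finset.sum_congr rfl fun k _ => ?_
  rw [smul_smul]

lemma cx_main (N : Matrix (Fin n) (Fin n) ℂ)
    (hN : ∀ μ : ℂ, N.charpoly.IsRoot μ → μ.re < 0) (v : Fin n → ℂ) :
    Tendsto (fun t : ℝ => (exp (t • N)).mulVec v) atTop (nhds 0) := by
  set f : Module.End ℂ (Fin n → ℂ) := Matrix.toLinAlgEquiv' N with hfdef
  have hv : v ∈ ⨆ μ : ℂ, f.maxGenEigenspace μ := by
    rw [Module.End.iSup_maxGenEigenspace_eq_top]; trivial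
  refine Submodule.iSup_induction
    (motive := fun v => Tendsto (fun t : ℝ => (exp (t • N)).mulVec v) atTop (nhds 0)) _ hv ?_ ?_ ?_
  · rintro μ w hw
    rcases eq_or_ne w 0 with rfl | hw0
    · simp [Matrix.mulVec_zero]
    obtain ⟨K, hK⟩ := (Module.End.mem_maxGenEigenspace _ _ _).mp hw
    have hroot : μ.re < 0 := by
      apply hN
      have hgen : f.HasGenEigenvalue μ (K + 1) := by
        rw [Module.End.hasGenEigenvalue_iff]
        intro hbot
        apply hw0
        have hmem : w ∈ f.genEigenspace μ (K + 1 : ℕ) := by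
          rw [Module.End.mem_genEigenspace_nat]
          rw [pow_succ']
          simp [Module.End.mul_apply, hK]
        rw [hbot] at hmem
        simpa using hmem
      have heig := Module.End.hasEigenvalue_of_hasGenEigenvalue hgen
      have hmin : (minpoly ℂ f).IsRoot μ := Module.End.hasEigenvalue_iff_isRoot.mp heig
      have hch : f.charpoly = N.charpoly := by
        rw [hfdef]
        conv_rhs => rw [← LinearMap.toMatrix'_toLin' N]
        rw [← LinearMap.charpoly_toMatrix (Matrix.toLinAlgEquiv' N) (Pi.basisFun ℂ (Fin n))]
        congr 1
      rw [← hch]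
      exact hmin.dvd (LinearMap.minpoly_dvd_charpoly f)
    have hSw : ((N - μ • 1) ^ K).mulVec w = 0 := by
      have h4 : (f - μ • 1) ^ K = Matrix.toLinAlgEquiv' ((N - μ • 1) ^ K) := by
        rw [map_pow, map_sub, _root_.map_smul, _root_.map_one, ← hfdef]
      have h5 := hK
      rw [h4] at h5
      rwa [Matrix.toLinAlgEquiv'_apply] at h5
    have hexp := exp_trunc N μ w K hSw
    rw [funext hexp]
    have h0 : (0 : Fin n → ℂ) = ∑ k ∈ Finset.range K, (0 : Fin n → ℂ) := by simp
    rw [h0]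
    refine tendsto_finset_sum _ fun k _ => ?_
    have := (cexp_decay hroot ((k.factorial : ℂ)⁻¹) k).smul_const (((N - μ • 1) ^ k).mulVec w)
    rwa [zero_smul] at this
  · simp [Matrix.mulVec_zero]
  · intro a b ha hb
    have := ha.add hb
    rw [add_zero] at this
    exact this.congr fun t => (Matrix.mulVec_add _ _ _).symm

lemma sol_eq (M : Matrix (Fin n) (Fin n) ℝ) (x : ℝ → Fin n → ℝ)
    (hx : Differentiable ℝ x)
    (hode : ∀ t : ℝ, 0 ≤ t → HasDerivAt x (M.mulVec (x t)) t) :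
    ∀ T : ℝ, 0 ≤ T → x T = (exp (T • M)).mulVec (x 0) := by
  let Φ₀ : Matrix (Fin n) (Fin n) ℝ →ₗ[ℝ] (Fin n → ℝ) →L[ℝ] (Fin n → ℝ) :=
    { toFun := fun A => LinearMap.toContinuousLinearMap (Matrix.toLinAlgEquiv' A)
      map_add' := by
        intro A B; ext v
        simp [Matrix.toLinAlgEquiv'_apply, Matrix.add_mulVec]
      map_smul' := by
        intro c A; ext v
        simp [Matrix.toLinAlgEquiv'_apply, Matrix.smul_mulVec] }
  let Φ : Matrix (Fin n) (Fin n) ℝ →L[ℝ] (Fin n → ℝ) →L[ℝ] (Fin n → ℝ) :=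
    LinearMap.toContinuousLinearMap Φ₀
  have hΦ : ∀ (A : Matrix (Fin n) (Fin n) ℝ) (v : Fin n → ℝ), Φ A v = A.mulVec v := by
    intro A v
    simp [Φ, Φ₀, Matrix.toLinAlgEquiv'_apply]
  have hc : ∀ t : ℝ, HasDerivAt (fun t : ℝ => exp ((-t) • M)) (-(exp ((-t) • M) * M)) t := by
    intro t
    have h := hasDerivAt_exp_smul_const (𝕂 := ℝ) M (-t)
    have hneg : HasDerivAt (fun s : ℝ => -s) (-1) t := (hasDerivAt_id t).neg
    have h2 := h.scomp t hneg
    simp only [Function.comp_def, neg_smul, one_smul] at h2 ⊢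
    exact h2
  set y : ℝ → Fin n → ℝ := fun t => Φ (exp ((-t) • M)) (x t) with hy
  have hderiv : ∀ t : ℝ, 0 ≤ t → HasDerivAt y 0 t := by
    intro t ht
    have h1 : HasDerivAt (fun t : ℝ => Φ (exp ((-t) • M))) (Φ (-(exp ((-t) • M) * M))) t :=
      Φ.hasFDerivAt.comp_hasDerivAt t (hc t)
    have h2 := h1.clm_apply (hode t ht)
    have h3 : Φ (-(exp ((-t) • M) * M)) (x t)
        + Φ (exp ((-t) • M)) (M.mulVec (x t)) = 0 := by
      rw [map_neg, ContinuousLinearMap.neg_apply, hΦ, hΦ, Matrix.mulVec_mulVec,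
        neg_add_cancel]
    rwa [h3] at h2
  have hycont : Continuous y := by
    have hcexp : Continuous fun t : ℝ => exp ((-t) • M) :=
      exp_continuous.comp ((continuous_neg).smul continuous_const)
    exact (Φ.continuous.comp hcexp).clm_apply hx.continuous
  intro T hT
  have hconst := constant_of_has_deriv_right_zero (f := y) (a := 0) (b := T)
    hycont.continuousOn (fun s hs => (hderiv s hs.1).hasDerivWithinAt)
  have hyT : y T = y 0 := hconst T ⟨hT, le_rfl⟩
  have hy0 : y 0 = x 0 := by
    rw [hy]
    simp only [neg_zero, zero_smul, exp_zero, hΦ, Matrix.one_mulVec]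
  have hinv : exp (T • M) * exp ((-T) • M) = 1 := by
    rw [← Matrix.exp_add_of_commute _ _ (((Commute.refl M).smul_left T).smul_right (-T))]
    rw [← add_smul, add_neg_cancel, zero_smul, exp_zero]
  calc x T = (1 : Matrix (Fin n) (Fin n) ℝ).mulVec (x T) := (Matrix.one_mulVec _).symm
    _ = (exp (T • M)).mulVec ((exp ((-T) • M)).mulVec (x T)) := by
        rw [Matrix.mulVec_mulVec, hinv]
    _ = (exp (T • M)).mulVec (x 0) := by
        rw [← hΦ (exp ((-T) • M)) (x T)]
        rw [show Φ (exp ((-T) • M)) (x T) = y T from rfl, hyT, hy0]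

lemma exp_map_cx (M : Matrix (Fin n) (Fin n) ℝ) (t : ℝ) :
    (exp (t • M)).map Complex.ofReal = exp (t • (M.map Complex.ofReal)) := by
  let ψ : Matrix (Fin n) (Fin n) ℝ →ₐ[ℝ] Matrix (Fin n) (Fin n) ℂ :=
    Complex.ofRealAm.mapMatrix
  have hcont : Continuous ψ := ψ.toLinearMap.continuous_of_finiteDimensional
  have h := map_exp ψ hcont (t • M)
  have h1 : ψ (t • M) = t • (M.map Complex.ofReal) := by
    rw [_root_.map_smul]
    congr 1
  have h2 : ψ (exp (t • M)) = (exp (t • M)).map Complex.ofReal := rfl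
  rw [← h2, ← h1]
  exact h

lemma mulVec_cx (A : Matrix (Fin n) (Fin n) ℝ) (u : Fin n → ℝ) (i : Fin n) :
    (A.map Complex.ofReal).mulVec (fun j => (u j : ℂ)) i = ((A.mulVec u i : ℝ) : ℂ) := by
  simp only [Matrix.mulVec, dotProduct, Matrix.map_apply]
  push_cast
  rfl

/-- If `M` is Hurwitz (every complex root of its characteristic
polynomial has strictly negative real part) and `x : ℝ → ℝⁿ` is a differentiable
solution of `x' = M x` on `t ≥ 0`, then `x(t) → 0` as `t → ∞`. -/
theorem hurwitz_linear_ode_tendsto_zero (n : ℕ)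
    (M : Matrix (Fin n) (Fin n) ℝ)
    (hM : ∀ μ : ℂ, (M.map (Complex.ofReal)).charpoly.IsRoot μ → μ.re < 0)
    (x : ℝ → Fin n → ℝ)
    (hx : Differentiable ℝ x)
    (hode : ∀ t : ℝ, 0 ≤ t → HasDerivAt x (M.mulVec (x t)) t) :
    Tendsto x atTop (nhds 0) := by
  have hsol := sol_eq M x hx hode
  have hkey := cx_main (M.map Complex.ofReal) hM (fun j => ((x 0 j : ℝ) : ℂ))
  rw [tendsto_pi_nhds]
  intro i
  have hi : Tendsto (fun t : ℝ =>
      ((exp (t • (M.map Complex.ofReal))).mulVec (fun j => ((x 0 j : ℝ) : ℂ))) i)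
      atTop (nhds 0) := by
    rw [tendsto_pi_nhds] at hkey
    simpa using hkey i
  have hre := (Complex.continuous_re.tendsto 0).comp hi
  rw [Complex.zero_re] at hre
  refine hre.congr' ?_
  filter_upwards [eventually_ge_atTop (0:ℝ)] with t ht
  have hval : ((x t i : ℝ) : ℂ)
      = (exp (t • (M.map Complex.ofReal))).mulVec (fun j => ((x 0 j : ℝ) : ℂ)) i := by
    rw [hsol t ht, ← exp_map_cx, mulVec_cx]
  show ((exp (t • (M.map Complex.ofReal))).mulVec (fun j => ((x 0 j : ℝ) : ℂ)) i).re = x t i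
  rw [← hval, Complex.ofReal_re]

end

end HurwitzODEAux

/-- If `M` is Hurwitz (every complex root of its characteristic
polynomial has strictly negative real part) and `x : ℝ → ℝⁿ` is a differentiable
solution of `x' = M x` on `t ≥ 0`, then `x(t) → 0` as `t → ∞`. -/
theorem hurwitz_linear_ode_tendsto_zero (n : ℕ)
    (M : Matrix (Fin n) (Fin n) ℝ)
    (hM : ∀ μ : ℂ, (M.map (Complex.ofReal)).charpoly.IsRoot μ → μ.re < 0)
    (x : ℝ → Fin n → ℝ)
    (hx : Differentiable ℝ x)
    (hode : ∀ t : ℝ, 0 ≤ t → HasDerivAt x (M.mulVec (x t)) t) :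
    Tendsto x atTop (nhds 0) := by
  exact HurwitzODEAux.hurwitz_linear_ode_tendsto_zero n M hM x hx hode
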